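/- Let L and P be countable dcpo's and let U, V be Scott open sets of L and P respectively, with enumerations U = {xₙ : n ∈ ℕ} and V = {yₙ : n ∈ ℕ}. For each n ∈ ℕ let 𝒰ₙ = {W ∈ σ(L) : {xᵢ : i ≤ n} ⊆ W} and 𝒱ₙ = {W ∈ σ(P) : {yᵢ : i ≤ n} ⊆ W}. If 𝒰 is a Scott open subset of the product lattice σ(L) × σ(P) containing (U,V), then there exists n ∈ ℕ with 𝒰ₙ × 𝒱ₙ ⊆ 𝒰. -/
import Mathlib


/-- A poset is a dcpo if every nonempty directed subset has a least upper bound. -/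
def IsDcpo (α : Type*) [Preorder α] : Prop :=
  ∀ D : Set α, D.Nonempty → DirectedOn (· ≤ ·) D → ∃ u, IsLUB D u

/-- A subset of a poset is Scott open if it is an upper set which is inaccessible by
suprema of directed sets. -/
def IsScottOpen {α : Type*} [Preorder α] (U : Set α) : Prop :=
  IsUpperSet U ∧ DirSupInacc U

/-- `σ(L)`: the poset (complete lattice) of Scott open subsets of `L`, ordered by
inclusion. -/
abbrev sigmaScott (α : Type*) [Preorder α] : Type _ := {U : Set α // IsScottOpen U}

/-- Auxiliary: the intersection of two Scott open sets is Scott open. -/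
lemma isScottOpen_inter {α : Type*} [Preorder α] {A B : Set α}
    (hA : IsScottOpen A) (hB : IsScottOpen B) : IsScottOpen (A ∩ B) := by
  constructor
  · exact hA.1.inter hB.1
  · intro d hne hdir a hlub ha
    obtain ⟨e, hed, heA⟩ := hA.2 hne hdir hlub ha.1
    obtain ⟨f, hfd, hfB⟩ := hB.2 hne hdir hlub ha.2
    obtain ⟨c, hcd, hce, hcf⟩ := hdir e hed f hfd
    exact ⟨c, hcd, hA.1 hce heA, hB.1 hcf hfB⟩

/-- Auxiliary key lemma: if `U` is Scott open with enumeration `x`, and `M j` are Scott open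
sets with `M j ⊆ U` containing the first `j` points of the enumeration, then the
"eventual intersection" `{p | ∀ j ≥ m, p ∈ M j}` is Scott open. -/
lemma isScottOpen_eventual_inter {α : Type*} [Preorder α] {U : Set α}
    (hU : IsScottOpen U) (x : ℕ → α) (hx : U = Set.range x)
    (M : ℕ → Set α) (hM : ∀ j, IsScottOpen (M j)) (hMU : ∀ j, M j ⊆ U)
    (hMF : ∀ j i, i ≤ j → x i ∈ M j) (m : ℕ) :
    IsScottOpen {p | ∀ j, m ≤ j → p ∈ M j} := by
  constructor
  · intro a b hab ha j hj
    exact (hM j).1 hab (ha j hj)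
  · intro d hne hdir a hlub haR
    have haU : a ∈ U := hMU m (haR m le_rfl)
    obtain ⟨d₁, hd₁d, hd₁U⟩ := hU.2 hne hdir hlub haU
    obtain ⟨i₀, hi₀⟩ : ∃ i, x i = d₁ := by rwa [hx, Set.mem_range] at hd₁U
    -- the directed set above `d₁`
    set D' : Set α := {e | e ∈ d ∧ d₁ ≤ e} with hD'def
    have hD'ne : d₁ ∈ D' := ⟨hd₁d, le_rfl⟩
    have hD'dir : DirectedOn (· ≤ ·) D' := by
      rintro e ⟨hed, hde⟩ f ⟨hfd, hdf⟩
      obtain ⟨c, hcd, hce, hcf⟩ := hdir e hed f hfd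
      exact ⟨c, ⟨hcd, hde.trans hce⟩, hce, hcf⟩
    have hD'lub : IsLUB D' a := by
      constructor
      · exact fun e he => hlub.1 he.1
      · intro u hu
        refine hlub.2 ?_
        intro e hed
        obtain ⟨c, hcd, hce, hdc⟩ := hdir e hed d₁ hd₁d
        exact hce.trans (hu ⟨hcd, hdc⟩)
    -- protection: everything above `d₁` is in `M j` for `j ≥ i₀`
    have hprot : ∀ e ∈ D', ∀ j, i₀ ≤ j → e ∈ M j := by
      intro e he j hj
      exact (hM j).1 (hi₀ ▸ he.2) (hMF j i₀ hj)
    by_contra hcon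
    have hbad : ∀ e ∈ D', ∃ j, m ≤ j ∧ j < i₀ ∧ e ∉ M j := by
      intro e he
      have heR : ¬ (∀ j, m ≤ j → e ∈ M j) := by
        intro h
        exact hcon ⟨e, he.1, h⟩
      push_neg at heR
      obtain ⟨j, hjm, hjM⟩ := heR
      refine ⟨j, hjm, ?_, hjM⟩
      by_contra hlt
      exact hjM (hprot e he j (by omega))
    by_cases hcof : ∃ j, m ≤ j ∧ j < i₀ ∧ ∀ e ∈ D', ∃ f ∈ D', e ≤ f ∧ f ∉ M j
    · obtain ⟨j', hj'm, _, hcf⟩ := hcof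
      set E : Set α := {e | e ∈ D' ∧ e ∉ M j'} with hEdef
      have hEne : E.Nonempty := by
        obtain ⟨f, hfD', _, hfM⟩ := hcf d₁ hD'ne
        exact ⟨f, hfD', hfM⟩
      have hEdir : DirectedOn (· ≤ ·) E := by
        rintro e ⟨heD', _⟩ f ⟨hfD', _⟩
        obtain ⟨c, hcD', hce, hcf'⟩ := hD'dir e heD' f hfD'
        obtain ⟨g, hgD', hcg, hgM⟩ := hcf c hcD'
        exact ⟨g, ⟨hgD', hgM⟩, hce.trans hcg, hcf'.trans hcg⟩
      have hElub : IsLUB E a := by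
        constructor
        · exact fun e he => hD'lub.1 he.1
        · intro u hu
          refine hD'lub.2 ?_
          intro e heD'
          obtain ⟨f, hfD', hef, hfM⟩ := hcf e heD'
          exact hef.trans (hu ⟨hfD', hfM⟩)
      have haM : a ∈ M j' := haR j' hj'm
      obtain ⟨e, heE, heM⟩ := (hM j').2 hEne hEdir hElub haM
      exact heE.2 heM
    · push_neg at hcof
      -- choose, for each relevant `j`, a bound past which `D'` lies in `M j`
      have hgex : ∀ j : ℕ, ∃ e, e ∈ D' ∧
          (m ≤ j → j < i₀ → ∀ f ∈ D', e ≤ f → f ∈ M j) := by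
        intro j
        by_cases h : m ≤ j ∧ j < i₀
        · obtain ⟨e, heD', he⟩ := hcof j h.1 h.2
          exact ⟨e, heD', fun _ _ => he⟩
        · exact ⟨d₁, hD'ne, fun h1 h2 => absurd ⟨h1, h2⟩ h⟩
      choose g hgD' hgM using hgex
      -- find a common upper bound in `D'` of `g j` for all `j < i₀`
      have hub : ∀ n : ℕ, ∃ e ∈ D', ∀ j, m ≤ j → j < n → j < i₀ → g j ≤ e := by
        intro n
        induction n with
        | zero => exact ⟨d₁, hD'ne, fun j _ h _ => absurd h (by omega)⟩
        | succ n ih =>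
          obtain ⟨e, heD', he⟩ := ih
          by_cases hn : m ≤ n ∧ n < i₀
          · obtain ⟨c, hcD', hec, hgc⟩ := hD'dir e heD' (g n) (hgD' n)
            refine ⟨c, hcD', ?_⟩
            intro j hjm hjn hji
            rcases Nat.lt_succ_iff_lt_or_eq.1 hjn with h | h
            · exact (he j hjm h hji).trans hec
            · subst h; exact hgc
          · refine ⟨e, heD', ?_⟩
            intro j hjm hjn hji
            rcases Nat.lt_succ_iff_lt_or_eq.1 hjn with h | h
            · exact he j hjm h hji
            · subst h; exact absurd ⟨hjm, hji⟩ hn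
      obtain ⟨e, heD', he⟩ := hub i₀
      obtain ⟨j, hjm, hji, hjM⟩ := hbad e heD'
      exact hjM (hgM j hjm hji e heD' (he j hjm hji hji))

/-- Let `L`, `P` be countable dcpo's, `U ∈ σ(L)`, `V ∈ σ(P)` with enumerations
`U = {xₙ : n ∈ ℕ}` and `V = {yₙ : n ∈ ℕ}`, and for `n ∈ ℕ` let
`𝒰ₙ = {W ∈ σ(L) : {xᵢ : i ≤ n} ⊆ W}` and `𝒱ₙ = {W ∈ σ(P) : {yᵢ : i ≤ n} ⊆ W}`.
If `𝒰` is a Scott open subset of the product poset `σ(L) × σ(P)` containing `(U, V)`, then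
`𝒰ₙ ×ˢ 𝒱ₙ ⊆ 𝒰` for some `n`. -/
theorem exists_basic_open_subset_of_scottOpen_in_product_of_scott_lattices
    (L P : Type) [PartialOrder L] [PartialOrder P] [Countable L] [Countable P]
    (hL : IsDcpo L) (hP : IsDcpo P)
    (U : sigmaScott L) (V : sigmaScott P) (x : ℕ → L) (y : ℕ → P)
    (hx : U.1 = Set.range x) (hy : V.1 = Set.range y)
    (𝒰 : Set (sigmaScott L × sigmaScott P)) (h𝒰 : IsScottOpen 𝒰) (hUV : (U, V) ∈ 𝒰) :
    ∃ n : ℕ,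
      ({W : sigmaScott L | ∀ i ≤ n, x i ∈ W.1} ×ˢ {W : sigmaScott P | ∀ i ≤ n, y i ∈ W.1})
        ⊆ 𝒰 := by
  by_contra hcon
  push_neg at hcon
  have hw : ∀ n, ∃ p : sigmaScott L × sigmaScott P,
      ((∀ i ≤ n, x i ∈ p.1.1) ∧ (∀ i ≤ n, y i ∈ p.2.1)) ∧ p ∉ 𝒰 := by
    intro n
    obtain ⟨q, hq, hqn⟩ := Set.not_subset.1 (hcon n)
    exact ⟨q, ⟨hq.1, hq.2⟩, hqn⟩
  choose p hp hpU using hw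
  -- the "shrunk" witnesses
  set M : ℕ → Set L := fun n => (p n).1.1 ∩ U.1 with hMdef
  set N : ℕ → Set P := fun n => (p n).2.1 ∩ V.1 with hNdef
  have hMopen : ∀ n, IsScottOpen (M n) := fun n => isScottOpen_inter (p n).1.2 U.2
  have hNopen : ∀ n, IsScottOpen (N n) := fun n => isScottOpen_inter (p n).2.2 V.2
  have hMU : ∀ n, M n ⊆ U.1 := fun n => Set.inter_subset_right
  have hNV : ∀ n, N n ⊆ V.1 := fun n => Set.inter_subset_right
  have hMF : ∀ j i, i ≤ j → x i ∈ M j := by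
    intro j i hij
    exact ⟨(hp j).1 i hij, by rw [hx]; exact ⟨i, rfl⟩⟩
  have hNF : ∀ j i, i ≤ j → y i ∈ N j := by
    intro j i hij
    exact ⟨(hp j).2 i hij, by rw [hy]; exact ⟨i, rfl⟩⟩
  -- the increasing chain of Scott open pairs
  set R : ℕ → Set L := fun m => {q | ∀ j, m ≤ j → q ∈ M j} with hRdef
  set S : ℕ → Set P := fun m => {q | ∀ j, m ≤ j → q ∈ N j} with hSdef
  have hRopen : ∀ m, IsScottOpen (R m) :=
    fun m => isScottOpen_eventual_inter U.2 x hx M hMopen hMU hMF m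
  have hSopen : ∀ m, IsScottOpen (S m) :=
    fun m => isScottOpen_eventual_inter V.2 y hy N hNopen hNV hNF m
  set A : ℕ → sigmaScott L × sigmaScott P :=
    fun k => (⟨R (k + 1), hRopen (k + 1)⟩, ⟨S (k + 1), hSopen (k + 1)⟩) with hAdef
  have hRmono : ∀ k l, k ≤ l → R k ⊆ R l := by
    intro k l hkl q hq j hj
    exact hq j (le_trans hkl hj)
  have hSmono : ∀ k l, k ≤ l → S k ⊆ S l := by
    intro k l hkl q hq j hj
    exact hq j (le_trans hkl hj)
  have hmono : ∀ k l, k ≤ l → A k ≤ A l := by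
    intro k l hkl
    refine Prod.le_def.2 ⟨?_, ?_⟩
    · exact Subtype.coe_le_coe.1 (hRmono (k + 1) (l + 1) (by omega))
    · exact Subtype.coe_le_coe.1 (hSmono (k + 1) (l + 1) (by omega))
  have hdirA : DirectedOn (· ≤ ·) (Set.range A) := by
    rintro _ ⟨i, rfl⟩ _ ⟨j, rfl⟩
    exact ⟨A (max i j), ⟨max i j, rfl⟩, hmono i (max i j) (le_max_left i j),
      hmono j (max i j) (le_max_right i j)⟩
  have hRsubU : ∀ m, R (m + 1) ⊆ U.1 := fun m q hq => hMU (m + 1) (hq (m + 1) le_rfl)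
  have hSsubV : ∀ m, S (m + 1) ⊆ V.1 := fun m q hq => hNV (m + 1) (hq (m + 1) le_rfl)
  have hlubA : IsLUB (Set.range A) (U, V) := by
    constructor
    · rintro _ ⟨k, rfl⟩
      refine Prod.le_def.2 ⟨?_, ?_⟩
      · exact Subtype.coe_le_coe.1 (hRsubU k)
      · exact Subtype.coe_le_coe.1 (hSsubV k)
    · intro b hb
      refine Prod.le_def.2 ⟨?_, ?_⟩
      · refine Subtype.coe_le_coe.1 ?_
        intro u hu
        obtain ⟨i, rfl⟩ : ∃ i, x i = u := by rwa [hx, Set.mem_range] at hu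
        have hxi : x i ∈ R (i + 1) := fun j hj => hMF j i (by omega)
        have hAb := hb ⟨i, rfl⟩
        exact (Prod.le_def.1 hAb).1 hxi
      · refine Subtype.coe_le_coe.1 ?_
        intro v hv
        obtain ⟨i, rfl⟩ : ∃ i, y i = v := by rwa [hy, Set.mem_range] at hv
        have hyi : y i ∈ S (i + 1) := fun j hj => hNF j i (by omega)
        have hAb := hb ⟨i, rfl⟩
        exact (Prod.le_def.1 hAb).2 hyi
  have hne : (Set.range A).Nonempty := ⟨A 0, 0, rfl⟩
  obtain ⟨_, ⟨k, rfl⟩, hAk⟩ := h𝒰.2 hne hdirA hlubA hUV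
  have hle : A k ≤ p (k + 1) := by
    refine Prod.le_def.2 ⟨?_, ?_⟩
    · exact Subtype.coe_le_coe.1 (fun q hq => (hq (k + 1) le_rfl).1)
    · exact Subtype.coe_le_coe.1 (fun q hq => (hq (k + 1) le_rfl).1)
  exact hpU (k + 1) (h𝒰.1 hle hAk)
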